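/- Under the hypotheses of the stable manifold theorem (Lipschitz bound ‖η(k,x) - η(k,y)‖ ≤ α_k ε ‖x-y‖ on B(δ), bounds ∑_{i=0}^k α_i ‖B(k,i+1)‖ ≤ K₁, ∑_{i=0}^∞ α_{k+1+i} ‖C(k+1+i,k+1)^{-1}‖ ≤ K₂, and ‖B(k,0)‖ ≤ 1 - α₀λ with ε(K₁+K₂) < α₀λ), the Lyapunov–Perron operator T is a contraction on ℓ₀(B(δ)) with contraction constant K = 1 - α₀λ + ε(K₁+K₂) < 1. -/

import Mathlib

open Filter

theorem stmt14 {s u : ℕ} (δ ε lam K₁ K₂ : ℝ) (α : ℕ → ℝ)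
    (B : ℕ → ℕ → (EuclideanSpace ℝ (Fin s) →L[ℝ] EuclideanSpace ℝ (Fin s)))
    (Cinv : ℕ → ℕ → (EuclideanSpace ℝ (Fin u) →L[ℝ] EuclideanSpace ℝ (Fin u)))
    (η : ℕ → (EuclideanSpace ℝ (Fin s) × EuclideanSpace ℝ (Fin u)) →
      (EuclideanSpace ℝ (Fin s) × EuclideanSpace ℝ (Fin u)))
    (hδ : 0 < δ) (hε : 0 < ε) (hlam : 0 < lam) (hα : ∀ k, 0 < α k)
    (hη0 : ∀ k, η k 0 = 0)
    (hη : ∀ k x y, ‖x‖ ≤ δ → ‖y‖ ≤ δ → ‖η k x - η k y‖ ≤ α k * ε * ‖x - y‖)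
    (hB0 : ∀ k, ‖B k 0‖ ≤ 1 - α 0 * lam)
    (hB : ∀ k, ∑ i ∈ Finset.range (k + 1), α i * ‖B k (i + 1)‖ ≤ K₁)
    (hCsummable : ∀ k, Summable fun i => α (k + 1 + i) * ‖Cinv (k + 1 + i) (k + 1)‖)
    (hC : ∀ k, (∑' i, α (k + 1 + i) * ‖Cinv (k + 1 + i) (k + 1)‖) ≤ K₂)
    (hcontr : ε * (K₁ + K₂) < α 0 * lam) :
    (1 - α 0 * lam + ε * (K₁ + K₂) < 1) ∧
    ∀ x y : ℕ → EuclideanSpace ℝ (Fin s) × EuclideanSpace ℝ (Fin u),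
      (∀ n, ‖x n‖ ≤ δ) → (∀ n, ‖y n‖ ≤ δ) →
      Tendsto x atTop (nhds 0) → Tendsto y atTop (nhds 0) →
      ∀ C' : ℝ, 0 ≤ C' → (∀ n, ‖x n - y n‖ ≤ C') → ∀ k,
      ‖((B k 0 ((x 0).1) + ∑ i ∈ Finset.range (k + 1), B k (i + 1) ((η i (x i)).1),
          -∑' i, Cinv (k + 1 + i) (k + 1) ((η (k + 1 + i) (x (k + 1 + i))).2)) :
          EuclideanSpace ℝ (Fin s) × EuclideanSpace ℝ (Fin u))
        - (B k 0 ((y 0).1) + ∑ i ∈ Finset.range (k + 1), B k (i + 1) ((η i (y i)).1),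
          -∑' i, Cinv (k + 1 + i) (k + 1) ((η (k + 1 + i) (y (k + 1 + i))).2))‖
        ≤ (1 - α 0 * lam + ε * (K₁ + K₂)) * C' := by
  have hK₁ : 0 ≤ K₁ :=
    le_trans (Finset.sum_nonneg fun i _ => mul_nonneg (hα i).le (norm_nonneg _)) (hB 0)
  have hK₂ : 0 ≤ K₂ :=
    le_trans (tsum_nonneg fun i => mul_nonneg (hα _).le (norm_nonneg _)) (hC 0)
  have hB0nn : 0 ≤ 1 - α 0 * lam := le_trans (norm_nonneg _) (hB0 0)
  refine ⟨by linarith, ?_⟩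
  intro x y hx hy _ _ C' hC' hxy k
  -- bound on differences of η
  have hηb : ∀ i, ‖η i (x i) - η i (y i)‖ ≤ α i * ε * C' := by
    intro i
    exact le_trans (hη i _ _ (hx i) (hy i))
      (mul_le_mul_of_nonneg_left (hxy i) (mul_nonneg (hα i).le hε.le))
  -- bound on norms of η
  have hηx : ∀ i, ‖η i (x i)‖ ≤ α i * ε * δ := by
    intro i
    have h := hη i (x i) 0 (hx i) (by simp [hδ.le])
    rw [hη0 i, sub_zero, sub_zero] at h
    exact le_trans h (mul_le_mul_of_nonneg_left (hx i) (mul_nonneg (hα i).le hε.le))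
  have hηy : ∀ i, ‖η i (y i)‖ ≤ α i * ε * δ := by
    intro i
    have h := hη i (y i) 0 (hy i) (by simp [hδ.le])
    rw [hη0 i, sub_zero, sub_zero] at h
    exact le_trans h (mul_le_mul_of_nonneg_left (hy i) (mul_nonneg (hα i).le hε.le))
  -- summability of the C-series terms
  have hsum : ∀ z : ℕ → EuclideanSpace ℝ (Fin s) × EuclideanSpace ℝ (Fin u),
      (∀ i, ‖η i (z i)‖ ≤ α i * ε * δ) →
      Summable fun i => Cinv (k + 1 + i) (k + 1) ((η (k + 1 + i) (z (k + 1 + i))).2) := by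
    intro z hz
    refine Summable.of_norm_bounded
      (g := fun i => (α (k + 1 + i) * ‖Cinv (k + 1 + i) (k + 1)‖) * (ε * δ))
      ((hCsummable k).mul_right (ε * δ)) ?_
    intro i
    calc ‖Cinv (k + 1 + i) (k + 1) ((η (k + 1 + i) (z (k + 1 + i))).2)‖
        ≤ ‖Cinv (k + 1 + i) (k + 1)‖ * ‖(η (k + 1 + i) (z (k + 1 + i))).2‖ :=
          (Cinv (k + 1 + i) (k + 1)).le_opNorm _
      _ ≤ ‖Cinv (k + 1 + i) (k + 1)‖ * (α (k + 1 + i) * ε * δ) := by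
          refine mul_le_mul_of_nonneg_left ?_ (norm_nonneg _)
          exact le_trans (norm_snd_le _) (hz _)
      _ = (α (k + 1 + i) * ‖Cinv (k + 1 + i) (k + 1)‖) * (ε * δ) := by ring
  have hsx := hsum x hηx
  have hsy := hsum y hηy
  -- first component bound
  have h1 : ‖(B k 0 ((x 0).1) + ∑ i ∈ Finset.range (k + 1), B k (i + 1) ((η i (x i)).1))
      - (B k 0 ((y 0).1) + ∑ i ∈ Finset.range (k + 1), B k (i + 1) ((η i (y i)).1))‖
      ≤ (1 - α 0 * lam) * C' + ε * K₁ * C' := by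
    have heq : (B k 0 ((x 0).1) + ∑ i ∈ Finset.range (k + 1), B k (i + 1) ((η i (x i)).1))
        - (B k 0 ((y 0).1) + ∑ i ∈ Finset.range (k + 1), B k (i + 1) ((η i (y i)).1))
        = B k 0 ((x 0).1 - (y 0).1)
          + ∑ i ∈ Finset.range (k + 1), B k (i + 1) ((η i (x i)).1 - (η i (y i)).1) := by
      simp only [map_sub, Finset.sum_sub_distrib]
      abel
    rw [heq]
    refine le_trans (norm_add_le _ _) (add_le_add ?_ ?_)
    · calc ‖B k 0 ((x 0).1 - (y 0).1)‖ ≤ ‖B k 0‖ * ‖(x 0).1 - (y 0).1‖ :=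
          (B k 0).le_opNorm _
        _ ≤ (1 - α 0 * lam) * C' := by
          refine mul_le_mul (hB0 k) ?_ (norm_nonneg _) hB0nn
          exact le_trans (norm_fst_le ((x 0) - (y 0))) (hxy 0)
    · calc ‖∑ i ∈ Finset.range (k + 1), B k (i + 1) ((η i (x i)).1 - (η i (y i)).1)‖
          ≤ ∑ i ∈ Finset.range (k + 1), ‖B k (i + 1) ((η i (x i)).1 - (η i (y i)).1)‖ :=
            norm_sum_le _ _
        _ ≤ ∑ i ∈ Finset.range (k + 1), (α i * ‖B k (i + 1)‖) * (ε * C') := by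
          refine Finset.sum_le_sum fun i _ => ?_
          calc ‖B k (i + 1) ((η i (x i)).1 - (η i (y i)).1)‖
              ≤ ‖B k (i + 1)‖ * ‖(η i (x i)).1 - (η i (y i)).1‖ := (B k (i + 1)).le_opNorm _
            _ ≤ ‖B k (i + 1)‖ * (α i * ε * C') := by
                refine mul_le_mul_of_nonneg_left ?_ (norm_nonneg _)
                exact le_trans (norm_fst_le (η i (x i) - η i (y i))) (hηb i)
            _ = (α i * ‖B k (i + 1)‖) * (ε * C') := by ring
        _ = (∑ i ∈ Finset.range (k + 1), α i * ‖B k (i + 1)‖) * (ε * C') := by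
          rw [← Finset.sum_mul]
        _ ≤ ε * K₁ * C' := by nlinarith [hB k, mul_nonneg hε.le hC']
  -- second component bound
  have h2 : ‖(-∑' i, Cinv (k + 1 + i) (k + 1) ((η (k + 1 + i) (x (k + 1 + i))).2))
      - (-∑' i, Cinv (k + 1 + i) (k + 1) ((η (k + 1 + i) (y (k + 1 + i))).2))‖
      ≤ ε * K₂ * C' := by
    have hrw : (-∑' i, Cinv (k + 1 + i) (k + 1) ((η (k + 1 + i) (x (k + 1 + i))).2))
        - (-∑' i, Cinv (k + 1 + i) (k + 1) ((η (k + 1 + i) (y (k + 1 + i))).2))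
        = ∑' i, (Cinv (k + 1 + i) (k + 1) ((η (k + 1 + i) (y (k + 1 + i))).2)
          - Cinv (k + 1 + i) (k + 1) ((η (k + 1 + i) (x (k + 1 + i))).2)) := by
      rw [Summable.tsum_sub hsy hsx]; abel
    rw [hrw]
    have hbd : ∀ i, ‖Cinv (k + 1 + i) (k + 1) ((η (k + 1 + i) (y (k + 1 + i))).2)
        - Cinv (k + 1 + i) (k + 1) ((η (k + 1 + i) (x (k + 1 + i))).2)‖
        ≤ (α (k + 1 + i) * ‖Cinv (k + 1 + i) (k + 1)‖) * (ε * C') := by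
      intro i
      rw [← map_sub]
      calc ‖Cinv (k + 1 + i) (k + 1) ((η (k + 1 + i) (y (k + 1 + i))).2
            - (η (k + 1 + i) (x (k + 1 + i))).2)‖
          ≤ ‖Cinv (k + 1 + i) (k + 1)‖ * ‖(η (k + 1 + i) (y (k + 1 + i))).2
            - (η (k + 1 + i) (x (k + 1 + i))).2‖ := (Cinv (k + 1 + i) (k + 1)).le_opNorm _
        _ ≤ ‖Cinv (k + 1 + i) (k + 1)‖ * (α (k + 1 + i) * ε * C') := by
            refine mul_le_mul_of_nonneg_left ?_ (norm_nonneg _)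
            refine le_trans (norm_snd_le (η (k + 1 + i) (y (k + 1 + i))
              - η (k + 1 + i) (x (k + 1 + i)))) ?_
            rw [← norm_neg]
            simpa using hηb (k + 1 + i)
        _ = (α (k + 1 + i) * ‖Cinv (k + 1 + i) (k + 1)‖) * (ε * C') := by ring
    have hsn : Summable fun i => ‖Cinv (k + 1 + i) (k + 1) ((η (k + 1 + i) (y (k + 1 + i))).2)
        - Cinv (k + 1 + i) (k + 1) ((η (k + 1 + i) (x (k + 1 + i))).2)‖ :=
      Summable.of_nonneg_of_le (fun i => norm_nonneg _) hbd ((hCsummable k).mul_right (ε * C'))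
    calc ‖∑' i, (Cinv (k + 1 + i) (k + 1) ((η (k + 1 + i) (y (k + 1 + i))).2)
          - Cinv (k + 1 + i) (k + 1) ((η (k + 1 + i) (x (k + 1 + i))).2))‖
        ≤ ∑' i, ‖Cinv (k + 1 + i) (k + 1) ((η (k + 1 + i) (y (k + 1 + i))).2)
          - Cinv (k + 1 + i) (k + 1) ((η (k + 1 + i) (x (k + 1 + i))).2)‖ :=
          norm_tsum_le_tsum_norm hsn
      _ ≤ ∑' i, (α (k + 1 + i) * ‖Cinv (k + 1 + i) (k + 1)‖) * (ε * C') :=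
          Summable.tsum_le_tsum hbd hsn ((hCsummable k).mul_right (ε * C'))
      _ = (∑' i, α (k + 1 + i) * ‖Cinv (k + 1 + i) (k + 1)‖) * (ε * C') := by
          rw [tsum_mul_right]
      _ ≤ ε * K₂ * C' := by nlinarith [hC k, mul_nonneg hε.le hC']
  rw [Prod.mk_sub_mk, Prod.norm_def]
  refine max_le (le_trans h1 ?_) (le_trans h2 ?_)
  · nlinarith [mul_nonneg (mul_nonneg hε.le hK₂) hC']
  · nlinarith [mul_nonneg hB0nn hC', mul_nonneg (mul_nonneg hε.le hK₁) hC']
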